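/- arXiv:1801.00714 — 4 statements merged into one kernel-verified Lean document; each statement's English description precedes it below -/
import Mathlib

section
/- Let N be a Poisson random variable with mean ξ > 0. Then E[|N − ξ|] ≥ (1/4)·min{2ξ, ξ^{1/2}}. -/
open Real

set_option maxHeartbeats 1000000

private lemma cast_desc2 (n : ℕ) : (n.descFactorial 2 : ℝ) = n * (n-1) := by
  rcases n with _|n
  · simp [Nat.descFactorial]
  · simp only [Nat.descFactorial]
    push_cast [Nat.succ_sub_succ, Nat.sub_zero]
    ring

private lemma cast_desc3 (n : ℕ) : (n.descFactorial 3 : ℝ) = n * (n-1) * (n-2) := by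
  rcases n with _|_|_|n
  · simp [Nat.descFactorial]
  · simp [Nat.descFactorial]
  · simp [Nat.descFactorial]
  · simp only [Nat.descFactorial]
    push_cast [Nat.succ_sub_succ, Nat.sub_zero]
    ring

private lemma cast_desc4 (n : ℕ) : (n.descFactorial 4 : ℝ) = n * (n-1) * (n-2) * (n-3) := by
  rcases n with _|_|_|_|n
  · simp [Nat.descFactorial]
  · simp [Nat.descFactorial]
  · simp [Nat.descFactorial]
  · simp [Nat.descFactorial]
  · simp only [Nat.descFactorial]
    push_cast [Nat.succ_sub_succ, Nat.sub_zero]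
    ring

private lemma hasSum_desc (ξ : ℝ) (k : ℕ) :
    HasSum (fun n : ℕ => Real.exp (-ξ) * ξ ^ n / n.factorial * (n.descFactorial k)) (ξ ^ k) := by
  have hsum : Summable (fun n : ℕ => ξ ^ n / n.factorial) := Real.summable_pow_div_factorial ξ
  have hexp : ∑' n : ℕ, ξ ^ n / n.factorial = Real.exp ξ := by
    rw [Real.exp_eq_exp_ℝ, NormedSpace.exp_eq_tsum_div]
  have base : HasSum (fun n : ℕ => ξ ^ n / n.factorial) (Real.exp ξ) := hexp ▸ hsum.hasSum
  have base2 := base.mul_left (Real.exp (-ξ) * ξ ^ k)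
  have hinj : Function.Injective (fun m : ℕ => m + k) := add_left_injective k
  have hzero : ∀ n : ℕ, n ∉ Set.range (fun m : ℕ => m + k) →
      Real.exp (-ξ) * ξ ^ n / n.factorial * (n.descFactorial k) = 0 := by
    intro n hn
    have hlt : n < k := by
      by_contra h
      exact hn ⟨n - k, Nat.sub_add_cancel (Nat.le_of_not_lt h)⟩
    rw [Nat.descFactorial_eq_zero_iff_lt.mpr hlt]
    simp
  rw [← hinj.hasSum_iff hzero]
  have key : (fun n : ℕ => Real.exp (-ξ) * ξ ^ n / n.factorial * (n.descFactorial k)) ∘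
      (fun m : ℕ => m + k) = fun m : ℕ =>
      Real.exp (-ξ) * ξ ^ k * (ξ ^ m / m.factorial) := by
    funext m
    have hd : (m + k).descFactorial k * m.factorial = (m + k).factorial := by
      have := Nat.factorial_mul_descFactorial (Nat.le_add_left k m)
      simpa [Nat.add_sub_cancel, mul_comm] using this
    have hfac : ((m + k).factorial : ℝ) = ((m + k).descFactorial k : ℝ) * m.factorial := by
      exact_mod_cast hd.symm
    have h1 : ((m+k).factorial : ℝ) ≠ 0 := Nat.cast_ne_zero.mpr (Nat.factorial_ne_zero _)
    have h2 : (m.factorial : ℝ) ≠ 0 := Nat.cast_ne_zero.mpr (Nat.factorial_ne_zero _)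
    have h3 : ((m + k).descFactorial k : ℝ) ≠ 0 := by
      intro h
      rw [h, zero_mul] at hfac
      exact h1 hfac
    simp only [Function.comp_apply]
    rw [pow_add]
    field_simp [hfac]
    rw [hfac]
    ring
  rw [key]
  have hone : Real.exp (-ξ) * Real.exp ξ = 1 := by rw [← Real.exp_add]; simp
  rw [show Real.exp (-ξ) * ξ ^ k * Real.exp ξ = ξ ^ k by rw [mul_right_comm, hone, one_mul]] at base2
  exact base2

/-- Cauchy–Schwarz for tsums. -/
private lemma tsum_cs {a b r : ℕ → ℝ} (ha : Summable a) (hb : Summable b)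
    (h0a : ∀ n, 0 ≤ a n) (h0b : ∀ n, 0 ≤ b n) (h0r : ∀ n, 0 ≤ r n)
    (hr : ∀ n, r n ^ 2 = a n * b n) (hrs : Summable r) :
    (∑' n, r n) ^ 2 ≤ (∑' n, a n) * (∑' n, b n) := by
  have hA : 0 ≤ ∑' n, a n := tsum_nonneg h0a
  have hB : 0 ≤ ∑' n, b n := tsum_nonneg h0b
  have hR : 0 ≤ ∑' n, r n := tsum_nonneg h0r
  have key : ∑' n, r n ≤ Real.sqrt ((∑' n, a n) * (∑' n, b n)) := by
    apply hrs.tsum_le_of_sum_le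
    intro s
    have h1 : (∑ i ∈ s, r i) ^ 2 ≤ (∑ i ∈ s, a i) * (∑ i ∈ s, b i) :=
      Finset.sum_sq_le_sum_mul_sum_of_sq_eq_mul s (fun i _ => h0a i) (fun i _ => h0b i)
        (fun i _ => hr i)
    have h2 : (∑ i ∈ s, a i) ≤ ∑' n, a n := ha.sum_le_tsum s (fun i _ => h0a i)
    have h3 : (∑ i ∈ s, b i) ≤ ∑' n, b n := hb.sum_le_tsum s (fun i _ => h0b i)
    have h4 : (∑ i ∈ s, r i) ^ 2 ≤ (∑' n, a n) * (∑' n, b n) := by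
      calc (∑ i ∈ s, r i) ^ 2 ≤ (∑ i ∈ s, a i) * (∑ i ∈ s, b i) := h1
        _ ≤ (∑' n, a n) * (∑' n, b n) := by
            apply mul_le_mul h2 h3 (Finset.sum_nonneg (fun i _ => h0b i)) hA
    nlinarith [Real.sq_sqrt (mul_nonneg hA hB), Real.sqrt_nonneg ((∑' n, a n) * (∑' n, b n)),
      Finset.sum_nonneg (fun i (_ : i ∈ s) => h0r i)]
  nlinarith [Real.sq_sqrt (mul_nonneg hA hB), Real.sqrt_nonneg ((∑' n, a n) * (∑' n, b n))]

/-- For `N ~ Poisson(ξ)` with `ξ > 0`,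
`E[|N − ξ|] ≥ (1/4)·min{2ξ, ξ^{1/2}}`, where the expectation is written out as the
series `∑ₙ e^{−ξ} ξⁿ/n! · |n − ξ|`. -/
theorem poisson_abs_mean_deviation_lower_bound (ξ : ℝ) (hξ : 0 < ξ) :
    (1 / 4) * min (2 * ξ) (Real.sqrt ξ) ≤
      ∑' n : ℕ, (Real.exp (-ξ) * ξ ^ n / n.factorial) * |(n : ℝ) - ξ| := by
  set p : ℕ → ℝ := fun n => Real.exp (-ξ) * ξ ^ n / n.factorial with hp
  have hp0 : ∀ n, 0 ≤ p n := fun n => by positivity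
  have d0 := hasSum_desc ξ 0
  have d1 := hasSum_desc ξ 1
  have d2 := hasSum_desc ξ 2
  have d3 := hasSum_desc ξ 3
  have d4 := hasSum_desc ξ 4
  -- second central moment
  have hx2 : HasSum (fun n : ℕ => p n * ((n : ℝ) - ξ) ^ 2) ξ := by
    have H := (d2.add (d1.mul_left (1 - 2*ξ))).add (d0.mul_left (ξ^2))
    have heq : (fun n : ℕ => (p n * (n.descFactorial 2) +
        (1 - 2*ξ) * (p n * (n.descFactorial 1))) + ξ^2 * (p n * (n.descFactorial 0))) =
        fun n : ℕ => p n * ((n : ℝ) - ξ) ^ 2 := by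
      funext n
      rw [cast_desc2]
      simp only [Nat.descFactorial_one, Nat.descFactorial_zero, Nat.cast_one]
      ring
    rw [heq] at H
    convert H using 1
    ring
  -- fourth central moment
  have hx4 : HasSum (fun n : ℕ => p n * ((n : ℝ) - ξ) ^ 4) (ξ + 3 * ξ^2) := by
    have H := (((d4.add (d3.mul_left (6 - 4*ξ))).add
        (d2.mul_left (7 - 12*ξ + 6*ξ^2))).add
        (d1.mul_left (1 - 4*ξ + 6*ξ^2 - 4*ξ^3))).add (d0.mul_left (ξ^4))
    have heq : (fun n : ℕ => (((p n * (n.descFactorial 4) +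
        (6 - 4*ξ) * (p n * (n.descFactorial 3))) +
        (7 - 12*ξ + 6*ξ^2) * (p n * (n.descFactorial 2))) +
        (1 - 4*ξ + 6*ξ^2 - 4*ξ^3) * (p n * (n.descFactorial 1))) +
        ξ^4 * (p n * (n.descFactorial 0))) =
        fun n : ℕ => p n * ((n : ℝ) - ξ) ^ 4 := by
      funext n
      rw [cast_desc4, cast_desc3, cast_desc2]
      simp only [Nat.descFactorial_one, Nat.descFactorial_zero, Nat.cast_one]
      ring
    rw [heq] at H
    convert H using 1
    ring
  have hp1 : HasSum p 1 := by simpa using d0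
  -- summabilities
  have hs2 : Summable (fun n : ℕ => p n * ((n : ℝ) - ξ) ^ 2) := hx2.summable
  have hs4 : Summable (fun n : ℕ => p n * ((n : ℝ) - ξ) ^ 4) := hx4.summable
  have hsabs : Summable (fun n : ℕ => p n * |(n : ℝ) - ξ|) := by
    refine Summable.of_nonneg_of_le (g := fun n => p n * |(n : ℝ) - ξ|)
      (f := fun n => p n * ((n : ℝ) - ξ) ^ 2 + p n)
      (fun n => by positivity) (fun n => ?_) (hs2.add hp1.summable)
    have habs : |(n : ℝ) - ξ| ≤ ((n : ℝ) - ξ) ^ 2 + 1 := by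
      nlinarith [abs_nonneg ((n : ℝ) - ξ), sq_abs ((n : ℝ) - ξ)]
    show p n * |(n : ℝ) - ξ| ≤ p n * ((n : ℝ) - ξ) ^ 2 + p n
    nlinarith [hp0 n]
  have hsabs3 : Summable (fun n : ℕ => p n * |(n : ℝ) - ξ| ^ 3) := by
    refine Summable.of_nonneg_of_le (g := fun n => p n * |(n : ℝ) - ξ| ^ 3)
      (f := fun n => p n * ((n : ℝ) - ξ) ^ 2 + p n * ((n : ℝ) - ξ) ^ 4)
      (fun n => by positivity) (fun n => ?_) (hs2.add hs4)
    have habs : |(n : ℝ) - ξ| ^ 3 ≤ ((n : ℝ) - ξ) ^ 2 + ((n : ℝ) - ξ) ^ 4 := by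
      have h1 : 0 ≤ |(n : ℝ) - ξ| := abs_nonneg _
      have h2 : |(n : ℝ) - ξ| ^ 2 = ((n : ℝ) - ξ) ^ 2 := sq_abs _
      have h4 : |(n : ℝ) - ξ| ^ 4 = ((n : ℝ) - ξ) ^ 4 := by
        rw [← abs_pow]; exact abs_of_nonneg (by positivity)
      nlinarith [mul_nonneg (mul_nonneg h1 h1) h1,
        mul_nonneg (mul_nonneg h1 h1) (sq_nonneg (|(n : ℝ) - ξ| - 1))]
    show p n * |(n : ℝ) - ξ| ^ 3 ≤ p n * ((n : ℝ) - ξ) ^ 2 + p n * ((n : ℝ) - ξ) ^ 4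
    nlinarith [hp0 n, abs_nonneg ((n : ℝ) - ξ)]
  set A := ∑' n : ℕ, p n * |(n : ℝ) - ξ| with hA
  set M := ∑' n : ℕ, p n * |(n : ℝ) - ξ| ^ 3 with hM
  have hA0 : 0 ≤ A := tsum_nonneg (fun n => by positivity)
  have hM0 : 0 ≤ M := tsum_nonneg (fun n => by positivity)
  show (1 / 4) * min (2 * ξ) (Real.sqrt ξ) ≤ A
  rcases le_or_gt (1/13 : ℝ) ξ with hc | hc
  · -- large ξ: Cauchy–Schwarz route
    have cs1 : ξ ^ 2 ≤ A * M := by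
      have := tsum_cs (a := fun n => p n * |(n : ℝ) - ξ|)
        (b := fun n => p n * |(n : ℝ) - ξ| ^ 3)
        (r := fun n => p n * ((n : ℝ) - ξ) ^ 2)
        hsabs hsabs3 (fun n => by positivity) (fun n => by positivity)
        (fun n => by positivity) ?_ hs2
      · rwa [hx2.tsum_eq] at this
      · intro n
        have h4 : |(n : ℝ) - ξ| * |(n : ℝ) - ξ| ^ 3 = ((n : ℝ) - ξ) ^ 4 := by
          rw [show |(n : ℝ) - ξ| * |(n : ℝ) - ξ| ^ 3 = |(n : ℝ) - ξ| ^ 4 by ring, ← abs_pow]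
          exact abs_of_nonneg (by positivity)
        calc (p n * ((n : ℝ) - ξ) ^ 2) ^ 2 = p n ^ 2 * ((n : ℝ) - ξ) ^ 4 := by ring
          _ = (p n * |(n : ℝ) - ξ|) * (p n * |(n : ℝ) - ξ| ^ 3) := by rw [← h4]; ring
    have cs2 : M ^ 2 ≤ ξ * (ξ + 3 * ξ^2) := by
      have := tsum_cs (a := fun n => p n * ((n : ℝ) - ξ) ^ 2)
        (b := fun n => p n * ((n : ℝ) - ξ) ^ 4)
        (r := fun n => p n * |(n : ℝ) - ξ| ^ 3)
        hs2 hs4 (fun n => by positivity) (fun n => by positivity)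
        (fun n => by positivity) ?_ hsabs3
      · rwa [hx2.tsum_eq, hx4.tsum_eq] at this
      · intro n
        have h6 : |(n : ℝ) - ξ| ^ 6 = ((n : ℝ) - ξ) ^ 6 := by
          rw [← abs_pow]; exact abs_of_nonneg (by positivity)
        calc (p n * |(n : ℝ) - ξ| ^ 3) ^ 2 = p n ^ 2 * |(n : ℝ) - ξ| ^ 6 := by ring
          _ = (p n * ((n : ℝ) - ξ) ^ 2) * (p n * ((n : ℝ) - ξ) ^ 4) := by rw [h6]; ring
    -- derive A² ≥ ξ/16
    have hA2 : ξ / 16 ≤ A ^ 2 := by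
      have h1 : ξ ^ 4 ≤ A ^ 2 * M ^ 2 := by nlinarith
      have h2 : A ^ 2 * M ^ 2 ≤ A ^ 2 * (ξ * (ξ + 3 * ξ^2)) := by nlinarith
      have h3 : ξ ^ 4 ≤ A ^ 2 * (ξ * (ξ + 3 * ξ^2)) := le_trans h1 h2
      have h4 : (0:ℝ) < ξ * (ξ + 3 * ξ^2) := by positivity
      have h5 : (0:ℝ) ≤ ξ^3 * (13 * ξ - 1) :=
        mul_nonneg (by positivity) (by linarith)
      nlinarith [h3, h4, h5]
    have hsq : Real.sqrt ξ / 4 ≤ A := by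
      have hs := Real.sq_sqrt hξ.le
      have hsn := Real.sqrt_nonneg ξ
      nlinarith
    calc (1 / 4) * min (2 * ξ) (Real.sqrt ξ) ≤ (1/4) * Real.sqrt ξ := by
          have := min_le_right (2 * ξ) (Real.sqrt ξ); linarith
      _ ≤ A := by linarith
  · -- small ξ: first term bound
    have hterm : p 0 * |((0 : ℕ) : ℝ) - ξ| ≤ A :=
      hsabs.le_tsum 0 (fun j _ => by positivity)
    have hp0v : p 0 * |((0 : ℕ) : ℝ) - ξ| = Real.exp (-ξ) * ξ := by
      simp [hp, abs_of_nonneg hξ.le]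
    have hexp : 1 - ξ ≤ Real.exp (-ξ) := by
      have := Real.add_one_le_exp (-ξ)
      linarith
    have hlow : ξ / 2 ≤ A := by
      have h1 : (1 - ξ) * ξ ≤ Real.exp (-ξ) * ξ := by nlinarith
      have h2 : ξ / 2 ≤ (1 - ξ) * ξ := by nlinarith
      rw [hp0v] at hterm
      linarith
    calc (1 / 4) * min (2 * ξ) (Real.sqrt ξ) ≤ (1/4) * (2 * ξ) := by
          have := min_le_left (2 * ξ) (Real.sqrt ξ); linarith
      _ ≤ A := by linarith
end

section
/- Let N be a Poisson random variable with mean ξ > 0. Then E[|N − ξ|] = 2·e^{−ξ}·ξ^{⌊ξ⌋+1}/⌊ξ⌋!. -/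
/-- For `N ~ Poisson(ξ)` with `ξ > 0`,
`E[|N − ξ|] = 2·e^{−ξ}·ξ^{⌊ξ⌋+1}/⌊ξ⌋!`, the expectation written out as the series
`∑ₙ e^{−ξ} ξⁿ/n! · |n − ξ|`. -/
theorem poisson_abs_mean_deviation_eq (ξ : ℝ) (hξ : 0 < ξ) :
    ∑' n : ℕ, (Real.exp (-ξ) * ξ ^ n / n.factorial) * |(n : ℝ) - ξ|
      = 2 * Real.exp (-ξ) * ξ ^ (⌊ξ⌋₊ + 1) / (⌊ξ⌋₊).factorial := by
  set m := ⌊ξ⌋₊ with hm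
  set p : ℕ → ℝ := fun n => Real.exp (-ξ) * ξ ^ n / n.factorial with hp
  set b : ℕ → ℝ := fun n => n * p n with hbdef
  have hb1 : ∀ n : ℕ, b (n + 1) = ξ * p n := by
    intro n
    have hfac : ((n + 1).factorial : ℝ) = (n + 1) * n.factorial := by
      push_cast [Nat.factorial_succ]; ring
    have h1 : (0:ℝ) < (n:ℝ) + 1 := by positivity
    have h2 : (0:ℝ) < (n.factorial : ℝ) := by positivity
    simp only [hbdef, hp, hfac, pow_succ]
    push_cast
    field_simp
  have hpsum : Summable p := by
    simpa [hp, mul_div_assoc] using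
      (Real.summable_pow_div_factorial ξ).mul_left (Real.exp (-ξ))
  have hbsum : Summable b := by
    apply (summable_nat_add_iff 1).1
    have : Summable (fun n : ℕ => ξ * p n) := hpsum.mul_left ξ
    simpa [hb1] using this
  have hppos : ∀ n : ℕ, 0 ≤ p n := by
    intro n; simp only [hp]; positivity
  have hfsum : Summable (fun n : ℕ => p n * |(n:ℝ) - ξ|) := by
    apply Summable.of_nonneg_of_le (fun n => by positivity)
      (fun n => ?_) (hbsum.add (hpsum.mul_left ξ))
    have habs : |(n:ℝ) - ξ| ≤ (n:ℝ) + ξ := by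
      have hn : (0:ℝ) ≤ (n:ℝ) := n.cast_nonneg
      rw [abs_le]; constructor <;> linarith
    calc p n * |(n:ℝ) - ξ| ≤ p n * ((n:ℝ) + ξ) := by
          exact mul_le_mul_of_nonneg_left habs (hppos n)
      _ = b n + ξ * p n := by simp only [hbdef]; ring
  have hmle : (m : ℝ) ≤ ξ := Nat.floor_le hξ.le
  have hmlt : ξ < (m : ℝ) + 1 := Nat.lt_floor_add_one ξ
  -- head
  have hhead : ∀ n ∈ Finset.range (m + 1),
      p n * |(n:ℝ) - ξ| = b (n + 1) - b n := by
    intro n hn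
    rw [Finset.mem_range, Nat.lt_succ_iff] at hn
    have hnle : (n : ℝ) ≤ ξ := le_trans (by exact_mod_cast hn) hmle
    rw [abs_of_nonpos (by linarith), hb1]
    simp only [hbdef]; ring
  -- tail
  have htail : ∀ n : ℕ,
      p (n + (m + 1)) * |((n + (m + 1) : ℕ) : ℝ) - ξ|
        = b (n + (m + 1)) - b (n + (m + 1) + 1) := by
    intro n
    have hge : ξ ≤ ((n + (m + 1) : ℕ) : ℝ) := by
      push_cast; linarith [Nat.cast_nonneg (α := ℝ) n]
    rw [abs_of_nonneg (by linarith), hb1]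
    simp only [hbdef]; push_cast; ring
  have hsplit := Summable.sum_add_tsum_nat_add (m + 1) hfsum
  rw [← hsplit]
  have hheadsum : ∑ n ∈ Finset.range (m + 1), p n * |(n:ℝ) - ξ| = b (m + 1) := by
    rw [Finset.sum_congr rfl hhead, Finset.sum_range_sub]
    simp [hbdef]
  have hshift : Summable (fun n : ℕ => b (n + (m + 1))) :=
    (summable_nat_add_iff (m + 1)).2 hbsum
  have hshift2 : Summable (fun n : ℕ => b (n + (m + 1) + 1)) := by
    have := (summable_nat_add_iff (m + 2)).2 hbsum
    simpa [add_assoc] using this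
  have htailsum : ∑' n : ℕ, p (n + (m + 1)) * |((n + (m + 1) : ℕ) : ℝ) - ξ|
      = b (m + 1) := by
    calc ∑' n : ℕ, p (n + (m + 1)) * |((n + (m + 1) : ℕ) : ℝ) - ξ|
        = ∑' n : ℕ, (b (n + (m + 1)) - b (n + (m + 1) + 1)) := by
          exact tsum_congr htail
      _ = (∑' n : ℕ, b (n + (m + 1))) - ∑' n : ℕ, b (n + (m + 1) + 1) :=
          Summable.tsum_sub hshift hshift2
      _ = b (m + 1) := by
          have h0 : ∑' n : ℕ, b (n + (m + 1)) =
              b (0 + (m + 1)) + ∑' n : ℕ, b (n + 1 + (m + 1)) := by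
            simpa using (Summable.tsum_eq_zero_add hshift)
          rw [h0]
          have : (fun n : ℕ => b (n + 1 + (m + 1))) = fun n : ℕ => b (n + (m + 1) + 1) := by
            funext n; ring_nf
          rw [this]
          simp
  rw [hheadsum, htailsum, hb1]
  simp only [hp, pow_succ]
  ring
end

section
/- Let M be a Poisson random variable with mean μ ≥ 1. Then P[M = ⌈μ⌉] > 1/(8·⌈μ⌉^{1/2}). -/
open Real

lemma factorial_le_stirling (n : ℕ) (hn : 1 ≤ n) :
    (Nat.factorial n : ℝ) ≤ Real.exp 1 * Real.sqrt n * ((n : ℝ) / Real.exp 1) ^ n := by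
  obtain ⟨m, rfl⟩ : ∃ m, n = m + 1 := ⟨n - 1, by omega⟩
  have h := Stirling.stirlingSeq'_antitone (Nat.zero_le m)
  simp only [Function.comp_apply, Nat.succ_eq_add_one, Nat.zero_add,
    Stirling.stirlingSeq_one] at h
  rw [Stirling.stirlingSeq] at h
  set N : ℕ := m + 1
  have hN : (0:ℝ) < (N : ℝ) := by positivity
  have hden : (0:ℝ) < Real.sqrt (2 * N : ℝ) * ((N : ℝ) / Real.exp 1) ^ N := by
    positivity
  rw [div_le_div_iff₀ hden (by positivity : (0:ℝ) < Real.sqrt 2)] at h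
  have hs : Real.sqrt (2 * (N:ℝ)) = Real.sqrt 2 * Real.sqrt N := Real.sqrt_mul (by norm_num) _
  have h2 : Real.sqrt 2 * Real.sqrt 2 = 2 := Real.mul_self_sqrt (by norm_num)
  rw [hs] at h
  have h' : (Nat.factorial N : ℝ) * Real.sqrt 2 ≤
      (Real.exp 1 * Real.sqrt N * ((N:ℝ) / Real.exp 1) ^ N) * Real.sqrt 2 := by
    nlinarith [h]
  exact le_of_mul_le_mul_right h' (Real.sqrt_pos.mpr (by norm_num))

/-- For `M ~ Poisson(μ)` with `μ ≥ 1`,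
`P[M = ⌈μ⌉] > 1/(8·⌈μ⌉^{1/2})`, the point mass written out as `e^{−μ} μ^{⌈μ⌉}/⌈μ⌉!`. -/
theorem poisson_point_mass_at_ceil_mean_lower_bound (μ : ℝ) (hμ : 1 ≤ μ) :
    1 / (8 * Real.sqrt (⌈μ⌉₊ : ℝ)) < Real.exp (-μ) * μ ^ ⌈μ⌉₊ / (⌈μ⌉₊).factorial := by
  set n : ℕ := ⌈μ⌉₊ with hn
  have hn1 : 1 ≤ n := Nat.one_le_ceil_iff.mpr (by linarith)
  set c : ℝ := (n : ℝ) with hc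
  have hc1 : (1:ℝ) ≤ c := by rw [hc]; exact_mod_cast hn1
  have hμc : μ ≤ c := Nat.le_ceil μ
  have hcμ : c < μ + 1 := by
    have := Nat.ceil_lt_add_one (by linarith : (0:ℝ) ≤ μ)
    exact_mod_cast this
  have hc0 : (0:ℝ) < c := by linarith
  have hμ0 : (0:ℝ) < μ := by linarith
  have hs : (0:ℝ) < Real.sqrt c := Real.sqrt_pos.mpr hc0
  -- step: exp ((μ - c - 1)/c) ≤ μ / c
  have hstep : Real.exp ((μ - c - 1) / c) ≤ μ / c := by
    have hx : (0:ℝ) < c + 1 - μ := by linarith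
    have h1 : (c + 1 - μ) / c + 1 ≤ Real.exp ((c + 1 - μ) / c) := Real.add_one_le_exp _
    have h1' : (0:ℝ) < (c + 1 - μ) / c + 1 := by positivity
    have h2 : Real.exp ((μ - c - 1) / c) ≤ ((c + 1 - μ) / c + 1)⁻¹ := by
      rw [show (μ - c - 1) / c = -((c + 1 - μ) / c) by ring, Real.exp_neg]
      exact inv_anti₀ h1' h1
    refine h2.trans ?_
    have he : (c + 1 - μ) / c + 1 = (2 * c + 1 - μ) / c := by field_simp; ring
    rw [he, inv_div]
    rw [div_le_div_iff₀ (by linarith) hc0]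
    nlinarith [sq_nonneg (c - μ)]
  -- raise to the n-th power
  have hpow : Real.exp (μ - c - 1) * c ^ n ≤ μ ^ n := by
    have h := pow_le_pow_left₀ (Real.exp_pos _).le hstep n
    rw [← Real.exp_nat_mul, div_pow] at h
    have hnc : (n : ℝ) * ((μ - c - 1) / c) = μ - c - 1 := by
      rw [← hc]; field_simp
    rw [hnc, le_div_iff₀ (pow_pos hc0 n)] at h
    exact h
  have hfac : (Nat.factorial n : ℝ) ≤ Real.exp 1 * Real.sqrt c * (c / Real.exp 1) ^ n :=
    factorial_le_stirling n hn1
  have hfac0 : (0 : ℝ) < (Nat.factorial n : ℝ) := by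
    exact_mod_cast Nat.factorial_pos n
  have hen : (c / Real.exp 1) ^ n = c ^ n * Real.exp (-c) := by
    rw [div_pow, ← Real.exp_nat_mul, mul_one, ← hc, Real.exp_neg, div_eq_mul_inv]
  have key : Real.exp (-2) / Real.sqrt c ≤ Real.exp (-μ) * μ ^ n / (Nat.factorial n : ℝ) := by
    have hA : Real.exp (-2) / Real.sqrt c ≤
        Real.exp (-μ) * μ ^ n / (Real.exp 1 * Real.sqrt c * (c / Real.exp 1) ^ n) := by
      rw [div_le_div_iff₀ hs (by positivity)]
      have hmul := mul_le_mul_of_nonneg_left hpow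
        (le_of_lt (mul_pos (Real.exp_pos (-μ)) hs))
      have hexp : Real.exp (-μ) * Real.exp (μ - c - 1) =
          Real.exp (-2) * Real.exp 1 * Real.exp (-c) := by
        rw [← Real.exp_add, ← Real.exp_add, ← Real.exp_add]; ring_nf
      calc Real.exp (-2) * (Real.exp 1 * Real.sqrt c * (c / Real.exp 1) ^ n)
          = Real.exp (-μ) * Real.sqrt c * (Real.exp (μ - c - 1) * c ^ n) := by
            rw [hen]; linear_combination (c ^ n * Real.sqrt c) * hexp.symm
        _ ≤ Real.exp (-μ) * Real.sqrt c * μ ^ n := hmul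
        _ = Real.exp (-μ) * μ ^ n * Real.sqrt c := by ring
    refine hA.trans ?_
    gcongr
  have he2 : Real.exp 2 < 8 := by
    have : Real.exp 2 = Real.exp 1 * Real.exp 1 := by rw [← Real.exp_add]; norm_num
    nlinarith [Real.exp_one_lt_d9, Real.exp_pos 1]
  have h8 : (1 : ℝ) / 8 < Real.exp (-2) := by
    rw [Real.exp_neg]
    have hinv : Real.exp 2 * (Real.exp 2)⁻¹ = 1 := mul_inv_cancel₀ (Real.exp_ne_zero 2)
    nlinarith [Real.exp_pos 2, inv_pos.mpr (Real.exp_pos 2)]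
  calc 1 / (8 * Real.sqrt c) < Real.exp (-2) / Real.sqrt c := by
        rw [div_lt_div_iff₀ (by positivity) hs]
        nlinarith [mul_lt_mul_of_pos_right h8 hs]
    _ ≤ Real.exp (-μ) * μ ^ n / (Nat.factorial n : ℝ) := key
end

section
/- Let T be a nonnegative random variable with T = f(X_1,…,X_M) satisfying the tail bound P[|T − E T| ≥ t | M = m] ≤ 2 exp(−m t²/2) for every m, and suppose M is Poisson with mean μ. Then for every t > 0, P[|T − E[T]| ≥ t] ≤ 2·exp(−μ(1 − e^{−t²/2})) ≤ 2·exp(−μ t²/(2 + t²)). -/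
open MeasureTheory

private lemma exp_tsum' (x : ℝ) : Real.exp x = ∑' n : ℕ, x ^ n / n.factorial := by
  rw [Real.exp_eq_exp_ℝ, NormedSpace.exp_eq_tsum_div]

/-- Let `M` be Poisson with mean `μ₀` and `T` a random variable
satisfying the conditional tail bound
`P[|T − E T| ≥ t, M = m] ≤ 2·exp(−m t²/2)·P[M = m]` for every `m`. Then for every `t > 0`,
`P[|T − E T| ≥ t] ≤ 2·exp(−μ₀(1 − e^{−t²/2})) ≤ 2·exp(−μ₀ t²/(2 + t²))`. -/
theorem poissonized_tail_bound
    {Ω : Type*} [MeasurableSpace Ω] (μP : Measure Ω) [IsProbabilityMeasure μP]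
    (M : Ω → ℕ) (hMmeas : Measurable M) (μ₀ : ℝ) (hμ₀ : 0 < μ₀)
    (hpois : ∀ m : ℕ, (μP {ω | M ω = m}).toReal
        = Real.exp (-μ₀) * μ₀ ^ m / m.factorial)
    (T : Ω → ℝ) (hTmeas : Measurable T) (t : ℝ) (ht : 0 < t)
    (hcond : ∀ m : ℕ,
      (μP ({ω | t ≤ |T ω - ∫ ω', T ω' ∂μP|} ∩ {ω | M ω = m})).toReal
        ≤ 2 * Real.exp (-(m : ℝ) * t ^ 2 / 2) * (μP {ω | M ω = m}).toReal) :
    (μP {ω | t ≤ |T ω - ∫ ω', T ω' ∂μP|}).toReal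
        ≤ 2 * Real.exp (-(μ₀ * (1 - Real.exp (-t ^ 2 / 2))))
    ∧ 2 * Real.exp (-(μ₀ * (1 - Real.exp (-t ^ 2 / 2))))
        ≤ 2 * Real.exp (-(μ₀ * t ^ 2 / (2 + t ^ 2))) := by
  set A : Set Ω := {ω | t ≤ |T ω - ∫ ω', T ω' ∂μP|} with hA
  have hAmeas : MeasurableSet A := by
    apply measurableSet_le measurable_const
    exact (hTmeas.sub measurable_const).abs
  -- decomposition
  have hdecomp : μP A = ∑' m : ℕ, μP (A ∩ {ω | M ω = m}) := by
    have hU : A = ⋃ m : ℕ, A ∩ {ω | M ω = m} := by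
      ext ω
      simp only [Set.mem_iUnion, Set.mem_inter_iff, Set.mem_setOf_eq]
      exact ⟨fun h => ⟨M ω, h, rfl⟩, fun ⟨m, h, _⟩ => h⟩
    have hdisj : Pairwise (Function.onFun Disjoint fun m => A ∩ {ω | M ω = m}) := by
      intro i j hij
      simp only [Function.onFun, Set.disjoint_left]
      rintro ω ⟨-, hi⟩ ⟨-, hj⟩
      exact hij (hi.symm.trans hj)
    have hm : ∀ m : ℕ, MeasurableSet (A ∩ {ω | M ω = m}) :=
      fun m => hAmeas.inter (hMmeas (measurableSet_singleton m))
    conv_lhs => rw [hU]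
    exact measure_iUnion hdisj hm
  have htoReal : (μP A).toReal = ∑' m : ℕ, (μP (A ∩ {ω | M ω = m})).toReal := by
    rw [hdecomp, ENNReal.tsum_toReal_eq]
    exact fun m => measure_ne_top _ _
  -- the bounding series
  have hbound : ∀ m : ℕ, 2 * Real.exp (-(m : ℝ) * t ^ 2 / 2)
      * (Real.exp (-μ₀) * μ₀ ^ m / m.factorial)
      = (2 * Real.exp (-μ₀)) * ((μ₀ * Real.exp (-t ^ 2 / 2)) ^ m / m.factorial) := by
    intro m
    rw [mul_pow, ← Real.exp_nat_mul]
    ring_nf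
  have hsummable : Summable (fun m : ℕ => 2 * Real.exp (-(m : ℝ) * t ^ 2 / 2)
      * (Real.exp (-μ₀) * μ₀ ^ m / m.factorial)) := by
    simp_rw [hbound]
    exact (Real.summable_pow_div_factorial _).mul_left _
  have hsum : (∑' m : ℕ, 2 * Real.exp (-(m : ℝ) * t ^ 2 / 2)
      * (Real.exp (-μ₀) * μ₀ ^ m / m.factorial))
      = 2 * Real.exp (-(μ₀ * (1 - Real.exp (-t ^ 2 / 2)))) := by
    simp_rw [hbound]
    rw [tsum_mul_left, ← exp_tsum', mul_assoc, ← Real.exp_add]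
    ring_nf
  have hle : ∀ m : ℕ, (μP (A ∩ {ω | M ω = m})).toReal
      ≤ 2 * Real.exp (-(m : ℝ) * t ^ 2 / 2) * (Real.exp (-μ₀) * μ₀ ^ m / m.factorial) := by
    intro m
    calc (μP (A ∩ {ω | M ω = m})).toReal
        ≤ 2 * Real.exp (-(m : ℝ) * t ^ 2 / 2) * (μP {ω | M ω = m}).toReal := hcond m
      _ = _ := by rw [hpois m]
  have hsummable' : Summable (fun m : ℕ => (μP (A ∩ {ω | M ω = m})).toReal) := by
    refine Summable.of_nonneg_of_le (fun m => ENNReal.toReal_nonneg) hle hsummable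
  constructor
  · calc (μP A).toReal = ∑' m : ℕ, (μP (A ∩ {ω | M ω = m})).toReal := htoReal
      _ ≤ ∑' m : ℕ, 2 * Real.exp (-(m : ℝ) * t ^ 2 / 2)
            * (Real.exp (-μ₀) * μ₀ ^ m / m.factorial) := Summable.tsum_le_tsum hle hsummable' hsummable
      _ = _ := hsum
  · have h2t : (0:ℝ) < 2 + t ^ 2 := by positivity
    have hx : t ^ 2 / (2 + t ^ 2) ≤ 1 - Real.exp (-t ^ 2 / 2) := by
      have h1 : Real.exp (-t ^ 2 / 2) ≤ 1 / (1 + t ^ 2 / 2) := by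
        rw [neg_div, Real.exp_neg, one_div]
        exact inv_anti₀ (by positivity)
          (by linarith [Real.add_one_le_exp (t ^ 2 / 2)])
      have h2 : 1 / (1 + t ^ 2 / 2) = 2 / (2 + t ^ 2) := by
        field_simp
      rw [h2] at h1
      have : 1 - 2 / (2 + t ^ 2) = t ^ 2 / (2 + t ^ 2) := by
        field_simp
        ring
      linarith
    gcongr 2 * Real.exp ?_
    rw [neg_le_neg_iff] at *
    calc μ₀ * t ^ 2 / (2 + t ^ 2) = μ₀ * (t ^ 2 / (2 + t ^ 2)) := by ring
      _ ≤ μ₀ * (1 - Real.exp (-t ^ 2 / 2)) := by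
          exact mul_le_mul_of_nonneg_left hx hμ₀.le
end
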